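/- For every positive integer T, every two prediction sequences r_1, r_2 ∈ [0,1]^T, and every state sequence y ∈ {0,1}^T, it holds that |ℓ1-ATB(r_1,y) − ℓ1-ATB(r_2,y)| ≤ (3/T) ‖r_1 − r_2‖_1 and |ATB(r_1,y) − ATB(r_2,y)| ≤ (6/T) ‖r_1 − r_2‖_1, where ‖r_1 − r_2‖_1 = Σ_{t=1}^T |r_{1,t} − r_{2,t}|. -/

import Mathlib

open MeasureTheory Finset

noncomputable section

/-- Averaged two-bin calibration error of predictions `r` w.r.t. states `y`:
the bin boundary `q` is uniform on `[0,1]`. -/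
def atbSeq {T : ℕ} (r y : Fin T → ℝ) : ℝ :=
  ∫ q in (0:ℝ)..1, (1 / (T:ℝ)^2) *
    ((∑ t, if r t < q then (r t - y t) else 0)^2 +
     (∑ t, if q ≤ r t then (r t - y t) else 0)^2)

/-- ℓ1 variant of the averaged two-bin calibration error on sequences. -/
def l1atbSeq {T : ℕ} (r y : Fin T → ℝ) : ℝ :=
  ∫ q in (0:ℝ)..1, (1 / (T:ℝ)) *
    (|∑ t, if r t < q then (r t - y t) else 0| +
     |∑ t, if q ≤ r t then (r t - y t) else 0|)

/-- Integrability helper: measurable and uniformly bounded implies interval integrable on [0,1]. -/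
lemma aux_ii {f : ℝ → ℝ} (hm : Measurable f) {C : ℝ} (h : ∀ q, |f q| ≤ C) :
    IntervalIntegrable f volume 0 1 := by
  rw [intervalIntegrable_iff]
  exact Measure.integrableOn_of_bounded
    (by rw [Set.uIoc_of_le zero_le_one, Real.volume_Ioc]; exact ENNReal.ofReal_ne_top)
    hm.aestronglyMeasurable
    (Filter.Eventually.of_forall fun q => by simpa [Real.norm_eq_abs] using h q)

lemma aux_meas_d1 (a b c : ℝ) : Measurable (fun q : ℝ =>
    (if a < q then a - c else 0) - (if b < q then b - c else 0)) := by
  exact ((Measurable.ite measurableSet_Ioi measurable_const measurable_const).sub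
    (Measurable.ite measurableSet_Ioi measurable_const measurable_const))

lemma aux_meas_d2 (a b c : ℝ) : Measurable (fun q : ℝ =>
    (if q ≤ a then a - c else 0) - (if q ≤ b then b - c else 0)) := by
  exact ((Measurable.ite measurableSet_Iic measurable_const measurable_const).sub
    (Measurable.ite measurableSet_Iic measurable_const measurable_const))

/-- Key per-coordinate integral bound, ordered version. -/
lemma aux_key_le (a b c : ℝ) (ha : a ∈ Set.Icc (0:ℝ) 1) (hb : b ∈ Set.Icc (0:ℝ) 1)
    (hc : c = 0 ∨ c = 1) (hab : a ≤ b) :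
    (∫ q in (0:ℝ)..1,
      (|(if a < q then a - c else 0) - (if b < q then b - c else 0)| +
       |(if q ≤ a then a - c else 0) - (if q ≤ b then b - c else 0)|)) ≤ 3 * |a - b| := by
  obtain ⟨ha0, ha1⟩ := ha
  obtain ⟨hb0, hb1⟩ := hb
  have hac : |a - c| ≤ 1 := by rcases hc with h | h <;> rw [h, abs_le] <;> constructor <;> linarith
  have hbc : |b - c| ≤ 1 := by rcases hc with h | h <;> rw [h, abs_le] <;> constructor <;> linarith
  set f : ℝ → ℝ := fun q =>
      (|(if a < q then a - c else 0) - (if b < q then b - c else 0)| +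
       |(if q ≤ a then a - c else 0) - (if q ≤ b then b - c else 0)|) with hf
  set h : ℝ → ℝ := fun q => |a - b| + 2 * (if a < q ∧ q ≤ b then (1:ℝ) else 0) with hh
  have hpt : ∀ q, f q ≤ h q := by
    intro q
    simp only [hf, hh]
    by_cases h1 : q ≤ a
    · have h2 : q ≤ b := h1.trans hab
      have h3 : ¬ a < q := not_lt.mpr h1
      have h4 : ¬ b < q := not_lt.mpr h2
      have h5 : ¬ (a < q ∧ q ≤ b) := fun hx => h3 hx.1
      simp only [h1, h2, h3, h4, h5, if_true, if_false, zero_sub, abs_neg, abs_zero, mul_zero]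
      have he : (a - c) - (b - c) = a - b := by ring
      rw [he]
      simp
    · push_neg at h1
      by_cases h2 : q ≤ b
      · have h3 : ¬ q ≤ a := not_le.mpr h1
        have h4 : ¬ b < q := not_lt.mpr h2
        have h5 : a < q ∧ q ≤ b := ⟨h1, h2⟩
        simp only [h1, h2, h3, h4, h5, and_self, if_true, if_false, sub_zero, zero_sub,
          abs_neg, mul_one]
        linarith [abs_nonneg (a - b)]
      · push_neg at h2
        have h3 : ¬ q ≤ a := not_le.mpr h1
        have h4 : ¬ q ≤ b := not_le.mpr h2
        have h5 : b < q := h2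
        have h6 : ¬ (a < q ∧ q ≤ b) := fun hx => h4 hx.2
        simp only [h1, h5, h3, h4, h6, if_true, if_false, sub_zero, abs_zero, mul_zero]
        have he : (a - c) - (b - c) = a - b := by ring
        rw [he]
        simp
  have hfm : Measurable f := ((aux_meas_d1 a b c).abs.add (aux_meas_d2 a b c).abs)
  have hfb : ∀ q, |f q| ≤ 4 := by
    intro q
    have h1 : |(if a < q then a - c else 0)| ≤ 1 := by split_ifs; exact hac; simp
    have h2 : |(if b < q then b - c else 0)| ≤ 1 := by split_ifs; exact hbc; simp
    have h3 : |(if q ≤ a then a - c else 0)| ≤ 1 := by split_ifs; exact hac; simp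
    have h4 : |(if q ≤ b then b - c else 0)| ≤ 1 := by split_ifs; exact hbc; simp
    have e1 := abs_sub ((if a < q then a - c else 0)) ((if b < q then b - c else 0))
    have e2 := abs_sub ((if q ≤ a then a - c else 0)) ((if q ≤ b then b - c else 0))
    have hfnn : 0 ≤ f q := by positivity
    rw [abs_of_nonneg hfnn]
    simp only [hf]
    linarith
  have hfi : IntervalIntegrable f volume 0 1 := aux_ii hfm hfb
  have hmite : Measurable (fun q : ℝ => if a < q ∧ q ≤ b then (1:ℝ) else 0) :=
    Measurable.ite measurableSet_Ioc measurable_const measurable_const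
  have hhm : Measurable h := measurable_const.add (hmite.const_mul 2)
  have hhb : ∀ q, |h q| ≤ |a - b| + 2 := by
    intro q
    simp only [hh]
    have h0 : (0:ℝ) ≤ (if a < q ∧ q ≤ b then (1:ℝ) else 0) := by positivity
    have h2 : (if a < q ∧ q ≤ b then (1:ℝ) else 0) ≤ 1 := by split_ifs <;> norm_num
    rw [abs_of_nonneg (by positivity)]
    linarith
  have hhi : IntervalIntegrable h volume 0 1 := aux_ii hhm hhb
  have hint : ∫ q in (0:ℝ)..1, f q ≤ ∫ q in (0:ℝ)..1, h q :=
    intervalIntegral.integral_mono zero_le_one hfi hhi hpt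
  have hcalc : ∫ q in (0:ℝ)..1, h q = |a - b| + 2 * (b - a) := by
    have hi : IntervalIntegrable (fun q : ℝ => if a < q ∧ q ≤ b then (1:ℝ) else 0) volume 0 1 := by
      apply aux_ii hmite (C := 1)
      intro q
      split_ifs <;> norm_num
    have hind : ∫ q in (0:ℝ)..1, (if a < q ∧ q ≤ b then (1:ℝ) else 0) = b - a := by
      have heq : ∀ q : ℝ, (if a < q ∧ q ≤ b then (1:ℝ) else 0) =
          Set.indicator (Set.Ioc a b) (fun _ => (1:ℝ)) q := by
        intro q
        rw [Set.indicator_apply]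
        simp [Set.mem_Ioc]
      rw [intervalIntegral.integral_congr (fun q _ => heq q),
        intervalIntegral.integral_of_le zero_le_one,
        setIntegral_indicator measurableSet_Ioc]
      have hsub : Set.Ioc 0 1 ∩ Set.Ioc a b = Set.Ioc a b := by
        apply Set.inter_eq_right.mpr
        intro x hx
        exact ⟨lt_of_le_of_lt ha0 hx.1, hx.2.trans hb1⟩
      rw [hsub, setIntegral_const, measureReal_def, Real.volume_Ioc, smul_eq_mul, mul_one,
        ENNReal.toReal_ofReal (by linarith)]
    rw [hh]
    rw [intervalIntegral.integral_add (intervalIntegrable_const) (hi.const_mul 2),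
      intervalIntegral.integral_const, intervalIntegral.integral_const_mul, hind]
    simp
  have : |a - b| + 2 * (b - a) ≤ 3 * |a - b| := by
    rw [abs_of_nonpos (by linarith)]
    linarith
  linarith

/-- Key per-coordinate integral bound. -/
lemma aux_key (a b c : ℝ) (ha : a ∈ Set.Icc (0:ℝ) 1) (hb : b ∈ Set.Icc (0:ℝ) 1)
    (hc : c = 0 ∨ c = 1) :
    (∫ q in (0:ℝ)..1,
      (|(if a < q then a - c else 0) - (if b < q then b - c else 0)| +
       |(if q ≤ a then a - c else 0) - (if q ≤ b then b - c else 0)|)) ≤ 3 * |a - b| := by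
  rcases le_total a b with hab | hab
  · exact aux_key_le a b c ha hb hc hab
  · have heq : (fun q : ℝ =>
        (|(if a < q then a - c else 0) - (if b < q then b - c else 0)| +
         |(if q ≤ a then a - c else 0) - (if q ≤ b then b - c else 0)|)) =
      (fun q : ℝ =>
        (|(if b < q then b - c else 0) - (if a < q then a - c else 0)| +
         |(if q ≤ b then b - c else 0) - (if q ≤ a then a - c else 0)|)) := by
      funext q
      rw [abs_sub_comm, abs_sub_comm ((if q ≤ a then a - c else 0))]
    rw [intervalIntegral.integral_congr (fun q _ => congrFun heq q), abs_sub_comm]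
    exact aux_key_le b a c hb ha hc hab


lemma aux_abs_sum_le {T : ℕ} (w : Fin T → ℝ) (hw : ∀ t, |w t| ≤ 1) :
    |∑ t, w t| ≤ (T : ℝ) := by
  calc |∑ t, w t| ≤ ∑ t, |w t| := Finset.abs_sum_le_sum_abs _ _
    _ ≤ ∑ _t : Fin T, (1:ℝ) := Finset.sum_le_sum fun t _ => hw t
    _ = T := by simp

lemma aux_generic (F₁ F₂ D : ℝ → ℝ) (c : ℝ)
    (h1 : IntervalIntegrable F₁ volume 0 1) (h2 : IntervalIntegrable F₂ volume 0 1)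
    (hD : IntervalIntegrable D volume 0 1)
    (hpt : ∀ q, |F₁ q - F₂ q| ≤ D q) (hDle : (∫ q in (0:ℝ)..1, D q) ≤ c) :
    |(∫ q in (0:ℝ)..1, F₁ q) - ∫ q in (0:ℝ)..1, F₂ q| ≤ c := by
  rw [← intervalIntegral.integral_sub h1 h2]
  calc |∫ q in (0:ℝ)..1, (F₁ q - F₂ q)|
      ≤ ∫ q in (0:ℝ)..1, |F₁ q - F₂ q| :=
        intervalIntegral.abs_integral_le_integral_abs zero_le_one
    _ ≤ ∫ q in (0:ℝ)..1, D q :=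
        intervalIntegral.integral_mono zero_le_one (h1.sub h2).abs hD hpt
    _ ≤ c := hDle

set_option maxHeartbeats 2000000 in
/-- Continuity of ATB and ℓ1-ATB on sequences. -/
theorem atb_seq_continuity (T : ℕ) (hT : 0 < T) (r₁ r₂ y : Fin T → ℝ)
    (hr₁ : ∀ t, r₁ t ∈ Set.Icc (0:ℝ) 1) (hr₂ : ∀ t, r₂ t ∈ Set.Icc (0:ℝ) 1)
    (hy : ∀ t, y t = 0 ∨ y t = 1) :
    |l1atbSeq r₁ y - l1atbSeq r₂ y| ≤ (3 / (T:ℝ)) * ∑ t, |r₁ t - r₂ t| ∧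
    |atbSeq r₁ y - atbSeq r₂ y| ≤ (6 / (T:ℝ)) * ∑ t, |r₁ t - r₂ t| := by
  have hT0 : (0:ℝ) < T := by exact_mod_cast hT
  have hTne : (T:ℝ) ≠ 0 := ne_of_gt hT0
  have hv₁ : ∀ t, |r₁ t - y t| ≤ 1 := fun t => by
    obtain ⟨h0, h1⟩ := hr₁ t
    rcases hy t with h | h <;> rw [h, abs_le] <;> constructor <;> linarith
  have hv₂ : ∀ t, |r₂ t - y t| ≤ 1 := fun t => by
    obtain ⟨h0, h1⟩ := hr₂ t
    rcases hy t with h | h <;> rw [h, abs_le] <;> constructor <;> linarith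
  -- measurability of the four bin sums
  have mA₁ : Measurable (fun q : ℝ => ∑ t, if r₁ t < q then r₁ t - y t else 0) :=
    Finset.measurable_sum _ fun t _ =>
      Measurable.ite measurableSet_Ioi measurable_const measurable_const
  have mA₂ : Measurable (fun q : ℝ => ∑ t, if r₂ t < q then r₂ t - y t else 0) :=
    Finset.measurable_sum _ fun t _ =>
      Measurable.ite measurableSet_Ioi measurable_const measurable_const
  have mB₁ : Measurable (fun q : ℝ => ∑ t, if q ≤ r₁ t then r₁ t - y t else 0) :=
    Finset.measurable_sum _ fun t _ =>
      Measurable.ite measurableSet_Iic measurable_const measurable_const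
  have mB₂ : Measurable (fun q : ℝ => ∑ t, if q ≤ r₂ t then r₂ t - y t else 0) :=
    Finset.measurable_sum _ fun t _ =>
      Measurable.ite measurableSet_Iic measurable_const measurable_const
  -- uniform bounds
  have bA₁ : ∀ q : ℝ, |∑ t, if r₁ t < q then r₁ t - y t else 0| ≤ (T:ℝ) := fun q =>
    aux_abs_sum_le _ fun t => by
      split_ifs with h
      exacts [hv₁ t, by simp]
  have bA₂ : ∀ q : ℝ, |∑ t, if r₂ t < q then r₂ t - y t else 0| ≤ (T:ℝ) := fun q =>
    aux_abs_sum_le _ fun t => by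
      split_ifs with h
      exacts [hv₂ t, by simp]
  have bB₁ : ∀ q : ℝ, |∑ t, if q ≤ r₁ t then r₁ t - y t else 0| ≤ (T:ℝ) := fun q =>
    aux_abs_sum_le _ fun t => by
      split_ifs with h
      exacts [hv₁ t, by simp]
  have bB₂ : ∀ q : ℝ, |∑ t, if q ≤ r₂ t then r₂ t - y t else 0| ≤ (T:ℝ) := fun q =>
    aux_abs_sum_le _ fun t => by
      split_ifs with h
      exacts [hv₂ t, by simp]
  -- per-coordinate differences
  have htb : ∀ (t : Fin T) (q : ℝ),
      |(if r₁ t < q then r₁ t - y t else 0) - (if r₂ t < q then r₂ t - y t else 0)| +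
      |(if q ≤ r₁ t then r₁ t - y t else 0) - (if q ≤ r₂ t then r₂ t - y t else 0)| ≤ 4 := by
    intro t q
    have e1 : |(if r₁ t < q then r₁ t - y t else 0)| ≤ 1 := by
      split_ifs
      exacts [hv₁ t, by simp]
    have e2 : |(if r₂ t < q then r₂ t - y t else 0)| ≤ 1 := by
      split_ifs
      exacts [hv₂ t, by simp]
    have e3 : |(if q ≤ r₁ t then r₁ t - y t else 0)| ≤ 1 := by
      split_ifs
      exacts [hv₁ t, by simp]
    have e4 : |(if q ≤ r₂ t then r₂ t - y t else 0)| ≤ 1 := by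
      split_ifs
      exacts [hv₂ t, by simp]
    have f1 := abs_sub (if r₁ t < q then r₁ t - y t else 0) (if r₂ t < q then r₂ t - y t else 0)
    have f2 := abs_sub (if q ≤ r₁ t then r₁ t - y t else 0) (if q ≤ r₂ t then r₂ t - y t else 0)
    linarith
  have hterm : ∀ t : Fin T, IntervalIntegrable (fun q : ℝ =>
      |(if r₁ t < q then r₁ t - y t else 0) - (if r₂ t < q then r₂ t - y t else 0)| +
      |(if q ≤ r₁ t then r₁ t - y t else 0) - (if q ≤ r₂ t then r₂ t - y t else 0)|)
      volume 0 1 := by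
    intro t
    apply aux_ii ((aux_meas_d1 (r₁ t) (r₂ t) (y t)).abs.add
      (aux_meas_d2 (r₁ t) (r₂ t) (y t)).abs) (C := 4)
    intro q
    simp only [Finset.sum_apply, Pi.add_apply, Pi.mul_apply, Pi.pow_apply]
    rw [abs_of_nonneg (by positivity)]
    exact htb t q
  -- integral of the sum of per-coordinate differences
  have hDsum : IntervalIntegrable (fun q : ℝ => ∑ t,
      (|(if r₁ t < q then r₁ t - y t else 0) - (if r₂ t < q then r₂ t - y t else 0)| +
       |(if q ≤ r₁ t then r₁ t - y t else 0) - (if q ≤ r₂ t then r₂ t - y t else 0)|))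
      volume 0 1 := by
    apply aux_ii (Finset.measurable_sum _ fun t _ =>
      ((aux_meas_d1 (r₁ t) (r₂ t) (y t)).abs.add (aux_meas_d2 (r₁ t) (r₂ t) (y t)).abs))
      (C := (T:ℝ) * 4)
    intro q
    simp only [Finset.sum_apply, Pi.add_apply, Pi.mul_apply, Pi.pow_apply]
    rw [abs_of_nonneg (Finset.sum_nonneg fun t _ => by positivity)]
    calc (∑ t,
        (|(if r₁ t < q then r₁ t - y t else 0) - (if r₂ t < q then r₂ t - y t else 0)| +
         |(if q ≤ r₁ t then r₁ t - y t else 0) - (if q ≤ r₂ t then r₂ t - y t else 0)|))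
        ≤ ∑ _t : Fin T, (4:ℝ) := Finset.sum_le_sum fun t _ => htb t q
      _ = (T:ℝ) * 4 := by simp [mul_comm]
  have hDval : (∫ q in (0:ℝ)..1, ∑ t,
      (|(if r₁ t < q then r₁ t - y t else 0) - (if r₂ t < q then r₂ t - y t else 0)| +
       |(if q ≤ r₁ t then r₁ t - y t else 0) - (if q ≤ r₂ t then r₂ t - y t else 0)|))
      ≤ 3 * ∑ t, |r₁ t - r₂ t| := by
    rw [intervalIntegral.integral_finset_sum fun t _ => hterm t]
    calc (∑ t, ∫ q in (0:ℝ)..1,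
        (|(if r₁ t < q then r₁ t - y t else 0) - (if r₂ t < q then r₂ t - y t else 0)| +
         |(if q ≤ r₁ t then r₁ t - y t else 0) - (if q ≤ r₂ t then r₂ t - y t else 0)|))
        ≤ ∑ t, 3 * |r₁ t - r₂ t| :=
          Finset.sum_le_sum fun t _ => aux_key (r₁ t) (r₂ t) (y t) (hr₁ t) (hr₂ t) (hy t)
      _ = 3 * ∑ t, |r₁ t - r₂ t| := by rw [Finset.mul_sum]
  -- pointwise comparisons of the bin sums
  have e1 : ∀ q : ℝ, |(∑ t, if r₁ t < q then r₁ t - y t else 0) -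
      (∑ t, if r₂ t < q then r₂ t - y t else 0)| ≤
      ∑ t, |(if r₁ t < q then r₁ t - y t else 0) - (if r₂ t < q then r₂ t - y t else 0)| := by
    intro q
    rw [← Finset.sum_sub_distrib]
    exact Finset.abs_sum_le_sum_abs _ _
  have e2 : ∀ q : ℝ, |(∑ t, if q ≤ r₁ t then r₁ t - y t else 0) -
      (∑ t, if q ≤ r₂ t then r₂ t - y t else 0)| ≤
      ∑ t, |(if q ≤ r₁ t then r₁ t - y t else 0) - (if q ≤ r₂ t then r₂ t - y t else 0)| := by
    intro q
    rw [← Finset.sum_sub_distrib]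
    exact Finset.abs_sum_le_sum_abs _ _
  have esplit : ∀ q : ℝ, (∑ t,
      (|(if r₁ t < q then r₁ t - y t else 0) - (if r₂ t < q then r₂ t - y t else 0)| +
       |(if q ≤ r₁ t then r₁ t - y t else 0) - (if q ≤ r₂ t then r₂ t - y t else 0)|)) =
      (∑ t, |(if r₁ t < q then r₁ t - y t else 0) - (if r₂ t < q then r₂ t - y t else 0)|) +
      ∑ t, |(if q ≤ r₁ t then r₁ t - y t else 0) - (if q ≤ r₂ t then r₂ t - y t else 0)| :=
    fun q => Finset.sum_add_distrib
  constructor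
  · -- ℓ1 part
    have hF₁ : IntervalIntegrable (fun q : ℝ => (1 / (T:ℝ)) *
        (|∑ t, if r₁ t < q then r₁ t - y t else 0| +
         |∑ t, if q ≤ r₁ t then r₁ t - y t else 0|)) volume 0 1 := by
      apply aux_ii ((mA₁.abs.add mB₁.abs).const_mul _) (C := (1/(T:ℝ)) * (2*T))
      intro q
      simp only [Finset.sum_apply, Pi.add_apply, Pi.mul_apply, Pi.pow_apply]
      rw [abs_of_nonneg (by positivity)]
      exact mul_le_mul_of_nonneg_left (by linarith [bA₁ q, bB₁ q]) (by positivity)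
    have hF₂ : IntervalIntegrable (fun q : ℝ => (1 / (T:ℝ)) *
        (|∑ t, if r₂ t < q then r₂ t - y t else 0| +
         |∑ t, if q ≤ r₂ t then r₂ t - y t else 0|)) volume 0 1 := by
      apply aux_ii ((mA₂.abs.add mB₂.abs).const_mul _) (C := (1/(T:ℝ)) * (2*T))
      intro q
      simp only [Finset.sum_apply, Pi.add_apply, Pi.mul_apply, Pi.pow_apply]
      rw [abs_of_nonneg (by positivity)]
      exact mul_le_mul_of_nonneg_left (by linarith [bA₂ q, bB₂ q]) (by positivity)
    rw [l1atbSeq, l1atbSeq]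
    apply aux_generic _ _ (fun q : ℝ => (1/(T:ℝ)) * ∑ t,
      (|(if r₁ t < q then r₁ t - y t else 0) - (if r₂ t < q then r₂ t - y t else 0)| +
       |(if q ≤ r₁ t then r₁ t - y t else 0) - (if q ≤ r₂ t then r₂ t - y t else 0)|))
      _ hF₁ hF₂ (hDsum.const_mul _)
    · intro q
      rw [← mul_sub, abs_mul, abs_of_nonneg (by positivity : (0:ℝ) ≤ 1/(T:ℝ))]
      apply mul_le_mul_of_nonneg_left _ (by positivity : (0:ℝ) ≤ 1/(T:ℝ))
      have t1 := abs_abs_sub_abs_le_abs_sub (∑ t, if r₁ t < q then r₁ t - y t else 0)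
        (∑ t, if r₂ t < q then r₂ t - y t else 0)
      have t2 := abs_abs_sub_abs_le_abs_sub (∑ t, if q ≤ r₁ t then r₁ t - y t else 0)
        (∑ t, if q ≤ r₂ t then r₂ t - y t else 0)
      have hre : (|∑ t, if r₁ t < q then r₁ t - y t else 0| +
          |∑ t, if q ≤ r₁ t then r₁ t - y t else 0|) -
          (|∑ t, if r₂ t < q then r₂ t - y t else 0| +
          |∑ t, if q ≤ r₂ t then r₂ t - y t else 0|) =
          ((|∑ t, if r₁ t < q then r₁ t - y t else 0| -
            |∑ t, if r₂ t < q then r₂ t - y t else 0|) +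
           (|∑ t, if q ≤ r₁ t then r₁ t - y t else 0| -
            |∑ t, if q ≤ r₂ t then r₂ t - y t else 0|)) := by ring
      rw [hre, esplit q]
      calc |(|∑ t, if r₁ t < q then r₁ t - y t else 0| -
            |∑ t, if r₂ t < q then r₂ t - y t else 0|) +
           (|∑ t, if q ≤ r₁ t then r₁ t - y t else 0| -
            |∑ t, if q ≤ r₂ t then r₂ t - y t else 0|)|
          ≤ |(|∑ t, if r₁ t < q then r₁ t - y t else 0| -
            |∑ t, if r₂ t < q then r₂ t - y t else 0|)| +
            |(|∑ t, if q ≤ r₁ t then r₁ t - y t else 0| -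
            |∑ t, if q ≤ r₂ t then r₂ t - y t else 0|)| := abs_add_le _ _
        _ ≤ _ := by linarith [e1 q, e2 q]
    · rw [intervalIntegral.integral_const_mul]
      calc (1/(T:ℝ)) * ∫ q in (0:ℝ)..1, ∑ t,
          (|(if r₁ t < q then r₁ t - y t else 0) - (if r₂ t < q then r₂ t - y t else 0)| +
           |(if q ≤ r₁ t then r₁ t - y t else 0) - (if q ≤ r₂ t then r₂ t - y t else 0)|)
          ≤ (1/(T:ℝ)) * (3 * ∑ t, |r₁ t - r₂ t|) :=
            mul_le_mul_of_nonneg_left hDval (by positivity)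
        _ = (3 / (T:ℝ)) * ∑ t, |r₁ t - r₂ t| := by ring
  · -- squared part
    have hG₁ : IntervalIntegrable (fun q : ℝ => (1 / (T:ℝ)^2) *
        ((∑ t, if r₁ t < q then r₁ t - y t else 0)^2 +
         (∑ t, if q ≤ r₁ t then r₁ t - y t else 0)^2)) volume 0 1 := by
      apply aux_ii (((mA₁.pow_const 2).add (mB₁.pow_const 2)).const_mul _)
        (C := (1/(T:ℝ)^2) * (2*(T:ℝ)^2))
      intro q
      have s1 : (∑ t, if r₁ t < q then r₁ t - y t else 0)^2 ≤ (T:ℝ)^2 :=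
        sq_le_sq' (abs_le.mp (bA₁ q)).1 (abs_le.mp (bA₁ q)).2
      have s2 : (∑ t, if q ≤ r₁ t then r₁ t - y t else 0)^2 ≤ (T:ℝ)^2 :=
        sq_le_sq' (abs_le.mp (bB₁ q)).1 (abs_le.mp (bB₁ q)).2
      simp only [Finset.sum_apply, Pi.add_apply, Pi.mul_apply, Pi.pow_apply]
      rw [abs_of_nonneg (by positivity)]
      exact mul_le_mul_of_nonneg_left (by linarith) (by positivity)
    have hG₂ : IntervalIntegrable (fun q : ℝ => (1 / (T:ℝ)^2) *
        ((∑ t, if r₂ t < q then r₂ t - y t else 0)^2 +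
         (∑ t, if q ≤ r₂ t then r₂ t - y t else 0)^2)) volume 0 1 := by
      apply aux_ii (((mA₂.pow_const 2).add (mB₂.pow_const 2)).const_mul _)
        (C := (1/(T:ℝ)^2) * (2*(T:ℝ)^2))
      intro q
      have s1 : (∑ t, if r₂ t < q then r₂ t - y t else 0)^2 ≤ (T:ℝ)^2 :=
        sq_le_sq' (abs_le.mp (bA₂ q)).1 (abs_le.mp (bA₂ q)).2
      have s2 : (∑ t, if q ≤ r₂ t then r₂ t - y t else 0)^2 ≤ (T:ℝ)^2 :=
        sq_le_sq' (abs_le.mp (bB₂ q)).1 (abs_le.mp (bB₂ q)).2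
      simp only [Finset.sum_apply, Pi.add_apply, Pi.mul_apply, Pi.pow_apply]
      rw [abs_of_nonneg (by positivity)]
      exact mul_le_mul_of_nonneg_left (by linarith) (by positivity)
    rw [atbSeq, atbSeq]
    apply aux_generic _ _ (fun q : ℝ => (2/(T:ℝ)) * ∑ t,
      (|(if r₁ t < q then r₁ t - y t else 0) - (if r₂ t < q then r₂ t - y t else 0)| +
       |(if q ≤ r₁ t then r₁ t - y t else 0) - (if q ≤ r₂ t then r₂ t - y t else 0)|))
      _ hG₁ hG₂ (hDsum.const_mul _)
    · intro q
      have hA : |(∑ t, if r₁ t < q then r₁ t - y t else 0)^2 -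
          (∑ t, if r₂ t < q then r₂ t - y t else 0)^2| ≤
          2*(T:ℝ)*|(∑ t, if r₁ t < q then r₁ t - y t else 0) -
          (∑ t, if r₂ t < q then r₂ t - y t else 0)| := by
        have hfac : (∑ t, if r₁ t < q then r₁ t - y t else 0)^2 -
            (∑ t, if r₂ t < q then r₂ t - y t else 0)^2 =
            ((∑ t, if r₁ t < q then r₁ t - y t else 0) +
             (∑ t, if r₂ t < q then r₂ t - y t else 0)) *
            ((∑ t, if r₁ t < q then r₁ t - y t else 0) -
             (∑ t, if r₂ t < q then r₂ t - y t else 0)) := by ring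
        rw [hfac, abs_mul]
        apply mul_le_mul_of_nonneg_right _ (abs_nonneg _)
        calc |(∑ t, if r₁ t < q then r₁ t - y t else 0) +
              (∑ t, if r₂ t < q then r₂ t - y t else 0)|
            ≤ |(∑ t, if r₁ t < q then r₁ t - y t else 0)| +
              |(∑ t, if r₂ t < q then r₂ t - y t else 0)| := abs_add_le _ _
          _ ≤ 2*(T:ℝ) := by linarith [bA₁ q, bA₂ q]
      have hB : |(∑ t, if q ≤ r₁ t then r₁ t - y t else 0)^2 -
          (∑ t, if q ≤ r₂ t then r₂ t - y t else 0)^2| ≤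
          2*(T:ℝ)*|(∑ t, if q ≤ r₁ t then r₁ t - y t else 0) -
          (∑ t, if q ≤ r₂ t then r₂ t - y t else 0)| := by
        have hfac : (∑ t, if q ≤ r₁ t then r₁ t - y t else 0)^2 -
            (∑ t, if q ≤ r₂ t then r₂ t - y t else 0)^2 =
            ((∑ t, if q ≤ r₁ t then r₁ t - y t else 0) +
             (∑ t, if q ≤ r₂ t then r₂ t - y t else 0)) *
            ((∑ t, if q ≤ r₁ t then r₁ t - y t else 0) -
             (∑ t, if q ≤ r₂ t then r₂ t - y t else 0)) := by ring
        rw [hfac, abs_mul]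
        apply mul_le_mul_of_nonneg_right _ (abs_nonneg _)
        calc |(∑ t, if q ≤ r₁ t then r₁ t - y t else 0) +
              (∑ t, if q ≤ r₂ t then r₂ t - y t else 0)|
            ≤ |(∑ t, if q ≤ r₁ t then r₁ t - y t else 0)| +
              |(∑ t, if q ≤ r₂ t then r₂ t - y t else 0)| := abs_add_le _ _
          _ ≤ 2*(T:ℝ) := by linarith [bB₁ q, bB₂ q]
      rw [← mul_sub, abs_mul, abs_of_nonneg (by positivity : (0:ℝ) ≤ 1/(T:ℝ)^2)]
      have hre : ((∑ t, if r₁ t < q then r₁ t - y t else 0)^2 +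
          (∑ t, if q ≤ r₁ t then r₁ t - y t else 0)^2) -
          ((∑ t, if r₂ t < q then r₂ t - y t else 0)^2 +
          (∑ t, if q ≤ r₂ t then r₂ t - y t else 0)^2) =
          (((∑ t, if r₁ t < q then r₁ t - y t else 0)^2 -
            (∑ t, if r₂ t < q then r₂ t - y t else 0)^2) +
           ((∑ t, if q ≤ r₁ t then r₁ t - y t else 0)^2 -
            (∑ t, if q ≤ r₂ t then r₂ t - y t else 0)^2)) := by ring
      rw [hre]
      have habs : |(((∑ t, if r₁ t < q then r₁ t - y t else 0)^2 -
            (∑ t, if r₂ t < q then r₂ t - y t else 0)^2) +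
           ((∑ t, if q ≤ r₁ t then r₁ t - y t else 0)^2 -
            (∑ t, if q ≤ r₂ t then r₂ t - y t else 0)^2))| ≤
          2*(T:ℝ)*((∑ t, |(if r₁ t < q then r₁ t - y t else 0) -
            (if r₂ t < q then r₂ t - y t else 0)|) +
           ∑ t, |(if q ≤ r₁ t then r₁ t - y t else 0) -
            (if q ≤ r₂ t then r₂ t - y t else 0)|) := by
        have := abs_add_le ((∑ t, if r₁ t < q then r₁ t - y t else 0)^2 -
            (∑ t, if r₂ t < q then r₂ t - y t else 0)^2)
          ((∑ t, if q ≤ r₁ t then r₁ t - y t else 0)^2 -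
            (∑ t, if q ≤ r₂ t then r₂ t - y t else 0)^2)
        have g1 := e1 q
        have g2 := e2 q
        nlinarith [hT0]
      calc (1/(T:ℝ)^2) * |(((∑ t, if r₁ t < q then r₁ t - y t else 0)^2 -
            (∑ t, if r₂ t < q then r₂ t - y t else 0)^2) +
           ((∑ t, if q ≤ r₁ t then r₁ t - y t else 0)^2 -
            (∑ t, if q ≤ r₂ t then r₂ t - y t else 0)^2))|
          ≤ (1/(T:ℝ)^2) * (2*(T:ℝ)*((∑ t, |(if r₁ t < q then r₁ t - y t else 0) -
              (if r₂ t < q then r₂ t - y t else 0)|) +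
             ∑ t, |(if q ≤ r₁ t then r₁ t - y t else 0) -
              (if q ≤ r₂ t then r₂ t - y t else 0)|)) :=
            mul_le_mul_of_nonneg_left habs (by positivity)
        _ = (2/(T:ℝ)) * ((∑ t, |(if r₁ t < q then r₁ t - y t else 0) -
              (if r₂ t < q then r₂ t - y t else 0)|) +
             ∑ t, |(if q ≤ r₁ t then r₁ t - y t else 0) -
              (if q ≤ r₂ t then r₂ t - y t else 0)|) := by
            field_simp
        _ = (2/(T:ℝ)) * ∑ t,
            (|(if r₁ t < q then r₁ t - y t else 0) - (if r₂ t < q then r₂ t - y t else 0)| +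
             |(if q ≤ r₁ t then r₁ t - y t else 0) - (if q ≤ r₂ t then r₂ t - y t else 0)|) := by
            rw [esplit q]
    · rw [intervalIntegral.integral_const_mul]
      calc (2/(T:ℝ)) * ∫ q in (0:ℝ)..1, ∑ t,
          (|(if r₁ t < q then r₁ t - y t else 0) - (if r₂ t < q then r₂ t - y t else 0)| +
           |(if q ≤ r₁ t then r₁ t - y t else 0) - (if q ≤ r₂ t then r₂ t - y t else 0)|)
          ≤ (2/(T:ℝ)) * (3 * ∑ t, |r₁ t - r₂ t|) :=
            mul_le_mul_of_nonneg_left hDval (by positivity)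
        _ = (6 / (T:ℝ)) * ∑ t, |r₁ t - r₂ t| := by ring

end
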